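/- For even k ≥ 2 and n ≥ 1, the number of k-dimensional balanced ballot paths of length kn with exactly one semisymmetric peak equals (C_{k/2,n})², where C_{j,n} is the number of j-dimensional balanced ballot paths of length jn. A path has exactly one semisymmetric peak if and only if its first (k/2)·n steps are all semisymmetric up-steps and its last (k/2)·n steps are all semisymmetric down-steps. -/

import Mathlib

open scoped Classical

/-- Number of steps among the first `i` steps of `P` equal to basis vector `j`. -/
def cnt (k n : ℕ) (P : Fin (k*n) → Fin k) (j : Fin k) (i : ℕ) : ℕ :=
  (Finset.univ.filter (fun t : Fin (k*n) => (t : ℕ) < i ∧ P t = j)).card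

/-- `P` is a `k`-dimensional balanced ballot path of length `k*n`:
each basis vector appears exactly `n` times, and every partial sum is
weakly decreasing in coordinates. -/
def IsBBP (k n : ℕ) (P : Fin (k*n) → Fin k) : Prop :=
  (∀ j : Fin k, cnt k n P j (k*n) = n) ∧
  (∀ i ≤ k*n, ∀ j j' : Fin k, j ≤ j' → cnt k n P j' i ≤ cnt k n P j i)

/-- Semisymmetric height `g_k` of the `i`-th intermediate point of `P`. -/
def ptHt (k n : ℕ) (P : Fin (k*n) → Fin k) (i : ℕ) : ℤ :=
  ∑ j : Fin k, ((k : ℤ) - 1 - 2*(j : ℕ)) * (cnt k n P j i)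

/-- The semisymmetric height of path `P` is at most `u`. -/
def HeightLE (k n : ℕ) (P : Fin (k*n) → Fin k) (u : ℤ) : Prop :=
  ∀ i ≤ k*n, ptHt k n P i ≤ u

/-- The semisymmetric height of path `P` is exactly `u`. -/
def HeightEq (k n : ℕ) (P : Fin (k*n) → Fin k) (u : ℤ) : Prop :=
  HeightLE k n P u ∧ ∃ i ≤ k*n, ptHt k n P i = u

/-- The number of `j`-dimensional balanced ballot paths of length `j*n`. -/
noncomputable def Cdim (j n : ℕ) : ℕ :=
  Nat.card {P : Fin (j*n) → Fin j // IsBBP j n P}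

/-- Number of semisymmetric peaks of `P`: up-steps (index `< k/2`) immediately
followed by a down-step (index `≥ k/2`). -/
noncomputable def numPeaks (k n : ℕ) (P : Fin (k*n) → Fin k) : ℕ :=
  (Finset.univ.filter (fun t : Fin (k*n) =>
    (P t : ℕ) < k/2 ∧ ∃ h : (t : ℕ) + 1 < k*n, k/2 ≤ (P ⟨(t : ℕ) + 1, h⟩ : ℕ))).card

open Finset

section aux
variable {k n : ℕ} {P : Fin (k*n) → Fin k}

lemma cnt_mono (j : Fin k) {i i' : ℕ} (h : i ≤ i') :
    cnt k n P j i ≤ cnt k n P j i' := by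
  apply Finset.card_le_card
  intro t ht
  simp only [Finset.mem_filter] at *
  exact ⟨ht.1, ht.2.1.trans_le h, ht.2.2⟩

lemma cnt_le_top (j : Fin k) (i : ℕ) : cnt k n P j i ≤ cnt k n P j (k*n) := by
  apply Finset.card_le_card
  intro t ht
  simp only [Finset.mem_filter] at *
  exact ⟨ht.1, t.isLt, ht.2.2⟩

lemma cnt_le_n (hP : IsBBP k n P) (j : Fin k) (i : ℕ) : cnt k n P j i ≤ n := by
  have := cnt_le_top (P := P) j i
  rwa [hP.1 j] at this

lemma card_filter_lt {M i : ℕ} (h : i ≤ M) :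
    (Finset.univ.filter (fun t : Fin M => (t : ℕ) < i)).card = i := by
  have : (Finset.univ.filter (fun t : Fin M => (t : ℕ) < i))
      = Finset.map ⟨Fin.castLE h, Fin.castLE_injective h⟩ Finset.univ := by
    ext t
    simp only [Finset.mem_filter, Finset.mem_map, Finset.mem_univ, true_and,
      Function.Embedding.coeFn_mk]
    constructor
    · intro ht; exact ⟨⟨t, ht⟩, rfl⟩
    · rintro ⟨s, rfl⟩; exact s.isLt
  rw [this, Finset.card_map, Finset.card_univ, Fintype.card_fin]

lemma sum_fiber (S : Finset (Fin k)) (i : ℕ) :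
    (Finset.univ.filter (fun t : Fin (k*n) => (t : ℕ) < i ∧ P t ∈ S)).card
      = ∑ j ∈ S, cnt k n P j i := by
  rw [Finset.card_eq_sum_card_fiberwise (f := P) (t := S)
    (by intro t ht; simp only [Finset.mem_coe, Finset.mem_filter, Finset.mem_univ, true_and] at ht; exact ht.2)]
  apply Finset.sum_congr rfl
  intro j hj
  unfold cnt
  congr 1
  ext t
  simp only [Finset.mem_filter, Finset.mem_univ, true_and]
  constructor
  · rintro ⟨⟨h1, _⟩, h3⟩; exact ⟨h1, h3⟩
  · rintro ⟨h1, h3⟩; exact ⟨⟨h1, h3 ▸ hj⟩, h3⟩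

end aux

section updown
variable {k m n : ℕ} {P : Fin (k*n) → Fin k} (hm : k = m + m)

/-- number of up-steps among first `i` -/
def upC (m k n : ℕ) (P : Fin (k*n) → Fin k) (i : ℕ) : ℕ :=
  (Finset.univ.filter (fun t : Fin (k*n) => (t : ℕ) < i ∧ (P t : ℕ) < m)).card

def downC (m k n : ℕ) (P : Fin (k*n) → Fin k) (i : ℕ) : ℕ :=
  (Finset.univ.filter (fun t : Fin (k*n) => (t : ℕ) < i ∧ m ≤ (P t : ℕ))).card

lemma upC_eq_sum (i : ℕ) : upC m k n P i
    = ∑ j ∈ Finset.univ.filter (fun j : Fin k => (j : ℕ) < m), cnt k n P j i := by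
  rw [← sum_fiber]
  unfold upC
  congr 1
  ext t
  simp

lemma downC_eq_sum (i : ℕ) : downC m k n P i
    = ∑ j ∈ Finset.univ.filter (fun j : Fin k => m ≤ (j : ℕ)), cnt k n P j i := by
  rw [← sum_fiber]
  unfold downC
  congr 1
  ext t
  simp

include hm

lemma card_A : (Finset.univ.filter (fun j : Fin k => (j : ℕ) < m)).card = m := by
  have : (Finset.univ.filter (fun j : Fin k => (j : ℕ) < m))
      = Finset.map ⟨Fin.castLE (show m ≤ k by omega), Fin.castLE_injective _⟩ Finset.univ := by
    ext j
    simp only [Finset.mem_filter, Finset.mem_map, Finset.mem_univ, true_and,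
      Function.Embedding.coeFn_mk]
    constructor
    · intro hj; exact ⟨⟨(j : ℕ), hj⟩, by simp [Fin.ext_iff, Fin.castLE]⟩
    · rintro ⟨s, rfl⟩; exact s.isLt
  rw [this, Finset.card_map, Finset.card_univ, Fintype.card_fin]

lemma down_le_up (hm0 : 0 < m) (hP : IsBBP k n P) {i : ℕ} (hi : i ≤ k*n) :
    downC m k n P i ≤ upC m k n P i := by
  rw [downC_eq_sum, upC_eq_sum]
  have hk0 : 0 < k := by omega
  have key : ∑ j ∈ Finset.univ.filter (fun j : Fin k => m ≤ (j : ℕ)), cnt k n P j i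
      = ∑ j ∈ Finset.univ.filter (fun j : Fin k => (j : ℕ) < m),
          cnt k n P ⟨((j : ℕ) + m) % k, Nat.mod_lt _ hk0⟩ i := by
    apply Finset.sum_nbij' (i := fun j : Fin k => (⟨(j : ℕ) - m, by omega⟩ : Fin k))
      (j := fun j : Fin k => (⟨((j : ℕ) + m) % k, Nat.mod_lt _ hk0⟩ : Fin k))
    · intro a ha
      simp only [Finset.mem_filter, Finset.mem_univ, true_and] at *
      have := a.isLt; omega
    · intro a ha
      simp only [Finset.mem_filter, Finset.mem_univ, true_and] at *
      have := a.isLt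
      rw [Nat.mod_eq_of_lt (by omega)]
      omega
    · intro a ha
      simp only [Finset.mem_filter, Finset.mem_univ, true_and] at ha
      have := a.isLt
      apply Fin.ext
      simp only
      rw [Nat.mod_eq_of_lt (by omega)]
      omega
    · intro a ha
      simp only [Finset.mem_filter, Finset.mem_univ, true_and] at ha
      apply Fin.ext
      simp only
      rw [Nat.mod_eq_of_lt (by omega)]
      omega
    · intro a ha
      simp only [Finset.mem_filter, Finset.mem_univ, true_and] at ha
      have := a.isLt
      congr 1
      apply Fin.ext
      simp only
      rw [Nat.mod_eq_of_lt (by omega)]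
      omega
  rw [key]
  apply Finset.sum_le_sum
  intro a ha
  simp only [Finset.mem_filter, Finset.mem_univ, true_and] at ha
  apply hP.2 i hi
  rw [Fin.le_def]
  simp only
  rw [Nat.mod_eq_of_lt (by omega)]
  omega

end updown

section updown2
variable {k m n : ℕ} {P : Fin (k*n) → Fin k} (hm : k = m + m)
include hm

lemma upC_top (hP : IsBBP k n P) : upC m k n P (k*n) = m*n := by
  rw [upC_eq_sum]
  rw [Finset.sum_congr rfl (fun j _ => hP.1 j), Finset.sum_const, card_A hm,
    smul_eq_mul]

lemma upC_add_downC {i : ℕ} (hi : i ≤ k*n) :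
    upC m k n P i + downC m k n P i = i := by
  unfold upC downC
  have hdisj : Disjoint
      (Finset.univ.filter (fun t : Fin (k*n) => (t : ℕ) < i ∧ (P t : ℕ) < m))
      (Finset.univ.filter (fun t : Fin (k*n) => (t : ℕ) < i ∧ m ≤ (P t : ℕ))) := by
    rw [Finset.disjoint_filter]
    intro t _ h1 h2
    omega
  have hunion : (Finset.univ.filter (fun t : Fin (k*n) => (t : ℕ) < i ∧ (P t : ℕ) < m))
      ∪ (Finset.univ.filter (fun t : Fin (k*n) => (t : ℕ) < i ∧ m ≤ (P t : ℕ)))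
      = Finset.univ.filter (fun t : Fin (k*n) => (t : ℕ) < i) := by
    ext t
    simp only [Finset.mem_union, Finset.mem_filter, Finset.mem_univ, true_and]
    omega
  rw [← Finset.card_union_of_disjoint hdisj, hunion, card_filter_lt hi]

end updown2

def ShapeP (k m n : ℕ) (P : Fin (k*n) → Fin k) : Prop :=
  ∀ t : Fin (k*n), ((t : ℕ) < m*n → (P t : ℕ) < m) ∧ (m*n ≤ (t : ℕ) → m ≤ (P t : ℕ))

section peaks
variable {k m n : ℕ} {P : Fin (k*n) → Fin k}

lemma kn_eq (hm : k = m + m) : k*n = m*n + m*n := by rw [hm, Nat.add_mul]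

lemma peaks_of_shape (hm : k = m + m) (hm2 : k/2 = m) (hm0 : 0 < m) (hn : 1 ≤ n)
    (hsh : ShapeP k m n P) : numPeaks k n P = 1 := by
  have hkn := kn_eq (n := n) hm
  have hN : 1 ≤ m*n := Nat.one_le_iff_ne_zero.mpr (by positivity)
  have hlt : m*n - 1 < k*n := by omega
  unfold numPeaks
  rw [hm2]
  have hset : (Finset.univ.filter (fun t : Fin (k*n) =>
      (P t : ℕ) < m ∧ ∃ h : (t : ℕ) + 1 < k*n, m ≤ (P ⟨(t : ℕ) + 1, h⟩ : ℕ)))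
      = {⟨m*n - 1, hlt⟩} := by
    ext t
    simp only [Finset.mem_filter, Finset.mem_univ, true_and, Finset.mem_singleton]
    constructor
    · rintro ⟨h1, h2, h3⟩
      have ht1 : (t : ℕ) < m*n := by
        by_contra hc
        have := (hsh t).2 (by omega)
        omega
      have ht2 : m*n ≤ (t : ℕ) + 1 := by
        by_contra hc
        have h4 := (hsh ⟨(t:ℕ)+1, h2⟩).1
        simp only [Fin.val_mk] at h4
        have := h4 (by omega)
        omega
      apply Fin.ext
      simp only [Fin.val_mk]
      omega
    · rintro rfl
      have e1 := (hsh ⟨m*n-1, hlt⟩).1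
      have e2 := (hsh ⟨m*n, by omega⟩).2
      simp only [Fin.val_mk] at e1 e2 ⊢
      refine ⟨e1 (by omega), by omega, ?_⟩
      have hfin : (⟨m*n - 1 + 1, by omega⟩ : Fin (k*n)) = ⟨m*n, by omega⟩ := by
        apply Fin.ext; simp only [Fin.val_mk]; omega
      rw [hfin]
      exact e2 (by omega)
  rw [hset, Finset.card_singleton]

lemma desc (hgood : ∀ v : ℕ, ∀ u ≤ v, ∀ (hu : u < k*n) (hv : v < k*n),
      True) :
    True := trivial

lemma exists_desc : ∀ v : ℕ, ∀ u ≤ v, ∀ (hv : v < k*n) (hu : u < k*n),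
    (P ⟨u, hu⟩ : ℕ) < m → m ≤ (P ⟨v, hv⟩ : ℕ) →
    ∃ t, u ≤ t ∧ t < v ∧ ∃ (ht : t < k*n) (ht1 : t+1 < k*n),
      (P ⟨t, ht⟩ : ℕ) < m ∧ m ≤ (P ⟨t+1, ht1⟩ : ℕ) := by
  intro v
  induction v with
  | zero =>
    intro u hu hv hu' h1 h2
    interval_cases u
    omega
  | succ v ih =>
    intro u hu hv hu' h1 h2
    have huv : u ≤ v := by
      rcases Nat.lt_or_ge u (v+1) with h | h
      · omega
      · exfalso
        have : u = v + 1 := by omega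
        subst this
        omega
    by_cases hc : (P ⟨v, by omega⟩ : ℕ) < m
    · exact ⟨v, huv, by omega, by omega, hv, hc, h2⟩
    · obtain ⟨t, h3, h4, h5⟩ := ih u huv (by omega) hu' h1 (by omega)
      exact ⟨t, h3, by omega, h5⟩

lemma shape_of_peaks (hm : k = m + m) (hm2 : k/2 = m) (hm0 : 0 < m) (hn : 1 ≤ n)
    (hP : IsBBP k n P) (hpk : numPeaks k n P = 1) : ShapeP k m n P := by
  have hkn := kn_eq (n := n) hm
  have hN : 1 ≤ m*n := Nat.one_le_iff_ne_zero.mpr (by positivity)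
  have hkn0 : 0 < k*n := by omega
  -- the peak set
  have hScard : (Finset.univ.filter (fun t : Fin (k*n) =>
      (P t : ℕ) < m ∧ ∃ h : (t:ℕ)+1 < k*n, m ≤ (P ⟨(t:ℕ)+1, h⟩ : ℕ))).card = 1 := by
    unfold numPeaks at hpk
    rw [hm2] at hpk
    exact hpk
  -- total function version of step values
  set p : ℕ → ℕ := fun t => if h : t < k*n then ((P ⟨t, h⟩ : ℕ)) else m with hpdef
  have hpeq : ∀ (t : ℕ) (h : t < k*n), p t = (P ⟨t, h⟩ : ℕ) := fun t h => dif_pos h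
  have hpP : ∀ t : Fin (k*n), p (t : ℕ) = (P t : ℕ) := by
    intro t
    rw [hpeq _ t.isLt, Fin.eta]
  -- first step is an up-step
  have hb0 : p 0 < m := by
    rw [hpeq 0 hkn0]
    by_contra hc
    have h1 : upC m k n P 1 + downC m k n P 1 = 1 := upC_add_downC hm (by omega)
    have h2 : downC m k n P 1 ≤ upC m k n P 1 := down_le_up hm hm0 hP (by omega)
    have h3 : 0 < downC m k n P 1 := by
      unfold downC
      apply Finset.card_pos.mpr
      refine ⟨⟨0, hkn0⟩, ?_⟩
      simp only [Finset.mem_filter, Finset.mem_univ, true_and, Fin.val_mk]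
      exact ⟨Nat.zero_lt_one, by omega⟩
    omega
  -- last step is a down-step
  have hlast : m ≤ p (k*n - 1) := by
    rw [hpeq _ (by omega)]
    by_contra hc
    push_neg at hc
    have e1 : downC m k n P (k*n - 1) = downC m k n P (k*n) := by
      unfold downC
      congr 1
      ext t
      simp only [Finset.mem_filter, Finset.mem_univ, true_and]
      constructor
      · rintro ⟨h1, h2⟩; exact ⟨t.isLt, h2⟩
      · rintro ⟨h1, h2⟩
        refine ⟨?_, h2⟩
        by_contra hc2
        have ht : t = ⟨k*n - 1, by omega⟩ := Fin.ext (by have := t.isLt; simp only [Fin.val_mk]; omega)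
        rw [ht] at h2
        exact absurd h2 (Nat.not_le_of_lt hc)
    have e2 : upC m k n P (k*n) + downC m k n P (k*n) = k*n := upC_add_downC hm le_rfl
    have e3 : upC m k n P (k*n) = m*n := upC_top hm hP
    have e4 : upC m k n P (k*n-1) + downC m k n P (k*n-1) = k*n-1 :=
      upC_add_downC hm (by omega)
    have e5 : downC m k n P (k*n-1) ≤ upC m k n P (k*n-1) :=
      down_le_up hm hm0 hP (by omega)
    omega
  -- descent-finding
  have hdesc : ∀ v : ℕ, ∀ u ≤ v, v < k*n → p u < m → m ≤ p v →
      ∃ t, u ≤ t ∧ t < v ∧ p t < m ∧ m ≤ p (t+1) := by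
    intro v
    induction v with
    | zero =>
      intro u hu _ h1 h2
      interval_cases u
      omega
    | succ v ih =>
      intro u hu hv h1 h2
      have huv : u ≤ v := by
        by_contra hc
        have : u = v + 1 := by omega
        subst this
        omega
      by_cases hcc : p v < m
      · exact ⟨v, huv, by omega, hcc, h2⟩
      · obtain ⟨t, h3, h4, h5⟩ := ih u huv (by omega) h1 (by omega)
        exact ⟨t, h3, by omega, h5⟩
  -- membership in the peak set
  have hmem : ∀ (t : ℕ) (ht1 : t + 1 < k*n), p t < m → m ≤ p (t+1) →
      (⟨t, by omega⟩ : Fin (k*n)) ∈ (Finset.univ.filter (fun t : Fin (k*n) =>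
      (P t : ℕ) < m ∧ ∃ h : (t:ℕ)+1 < k*n, m ≤ (P ⟨(t:ℕ)+1, h⟩ : ℕ))) := by
    intro t ht1 h1 h2
    rw [hpeq _ (by omega)] at h1
    rw [hpeq _ ht1] at h2
    simp only [Finset.mem_filter, Finset.mem_univ, true_and, Fin.val_mk]
    exact ⟨h1, ht1, h2⟩
  -- no ascents
  have hasc : ∀ s : ℕ, s + 1 < k*n → m ≤ p s → m ≤ p (s+1) := by
    intro s hs1 hs
    by_contra hc
    push_neg at hc
    have hs0 : 0 < s := by
      rcases Nat.eq_zero_or_pos s with h | h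
      · subst h; omega
      · exact h
    obtain ⟨t1, hta, htb, htc, htd⟩ := hdesc s 0 (Nat.zero_le _) (by omega) hb0 hs
    obtain ⟨t2, hta2, htb2, htc2, htd2⟩ :=
      hdesc (k*n - 1) (s+1) (by omega) (by omega) hc hlast
    have hne : t1 ≠ t2 := by omega
    have hsub : ({⟨t1, by omega⟩, ⟨t2, by omega⟩} : Finset (Fin (k*n)))
        ⊆ (Finset.univ.filter (fun t : Fin (k*n) =>
        (P t : ℕ) < m ∧ ∃ h : (t:ℕ)+1 < k*n, m ≤ (P ⟨(t:ℕ)+1, h⟩ : ℕ))) := by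
      intro x hx
      simp only [Finset.mem_insert, Finset.mem_singleton] at hx
      rcases hx with rfl | rfl
      · exact hmem t1 (by omega) htc htd
      · exact hmem t2 (by omega) htc2 htd2
    have hcard2 : ({⟨t1, by omega⟩, ⟨t2, by omega⟩} : Finset (Fin (k*n))).card = 2 :=
      Finset.card_pair (by simp [Fin.ext_iff]; omega)
    have := Finset.card_le_card hsub
    omega
  -- once a down-step, always a down-step
  have hmono : ∀ s d : ℕ, s + d < k*n → m ≤ p s → m ≤ p (s+d) := by
    intro s d
    induction d with
    | zero => intro _ h; simpa using h
    | succ d ih =>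
      intro hd h
      have := ih (by omega) h
      have := hasc (s+d) (by omega) this
      simpa [Nat.add_assoc] using this
  -- the threshold
  have hFne : (Finset.univ.filter (fun t : Fin (k*n) => m ≤ (P t : ℕ))).Nonempty := by
    refine ⟨⟨k*n - 1, by omega⟩, ?_⟩
    simp only [Finset.mem_filter, Finset.mem_univ, true_and]
    rw [← hpeq _ (by omega)]
    exact hlast
  set t0 : Fin (k*n) := (Finset.univ.filter (fun t : Fin (k*n) => m ≤ (P t : ℕ))).min' hFne
    with ht0
  have ht0mem : m ≤ (P t0 : ℕ) := by
    have := Finset.min'_mem _ hFne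
    rw [← ht0] at this
    simpa using this
  have hup : ∀ t : Fin (k*n), ((P t : ℕ) < m ↔ (t : ℕ) < (t0 : ℕ)) := by
    intro t
    constructor
    · intro h
      by_contra hc
      push_neg at hc
      have h1 : m ≤ p ((t0 : ℕ) + ((t : ℕ) - (t0 : ℕ))) := by
        apply hmono _ _ (by have := t.isLt; omega)
        rw [hpP t0]
        exact ht0mem
      have h2 : (t0 : ℕ) + ((t : ℕ) - (t0 : ℕ)) = (t : ℕ) := by omega
      rw [h2, hpP t] at h1
      omega
    · intro h
      by_contra hc
      push_neg at hc
      have : t0 ≤ t := Finset.min'_le _ t (by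
        simp only [Finset.mem_filter, Finset.mem_univ, true_and]; exact hc)
      rw [Fin.le_def] at this
      omega
  have hcard : upC m k n P (k*n) = (t0 : ℕ) := by
    unfold upC
    have hset : (Finset.univ.filter (fun t : Fin (k*n) => (t : ℕ) < k*n ∧ (P t : ℕ) < m))
        = Finset.univ.filter (fun t : Fin (k*n) => (t : ℕ) < (t0 : ℕ)) := by
      ext t
      simp only [Finset.mem_filter, Finset.mem_univ, true_and]
      constructor
      · rintro ⟨_, h⟩; exact (hup t).mp h
      · intro h; exact ⟨t.isLt, (hup t).mpr h⟩
    rw [hset, card_filter_lt (le_of_lt t0.isLt)]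
  have ht0val : (t0 : ℕ) = m*n := by
    have := upC_top hm hP
    omega
  intro t
  constructor
  · intro h
    exact (hup t).mpr (by omega)
  · intro h
    by_contra hc
    push_neg at hc
    have := (hup t).mp hc
    omega

end peaks

section split
variable {k m n : ℕ}

lemma cnt_zero {k n : ℕ} (P : Fin (k*n) → Fin k) (j : Fin k) : cnt k n P j 0 = 0 := by
  unfold cnt
  convert Finset.card_empty
  ext t
  simp

lemma cnt_first (hm : k = m + m) {P : Fin (k*n) → Fin k} {Q1 : Fin (m*n) → Fin m}
    (hcomp : ∀ (t : ℕ) (h1 : t < m*n) (h2 : t < k*n), ((Q1 ⟨t, h1⟩ : ℕ)) = (P ⟨t, h2⟩ : ℕ))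
    (hsh : ∀ t : Fin (k*n), m*n ≤ (t:ℕ) → m ≤ (P t : ℕ))
    (j : Fin m) (j1 : Fin k) (hj : (j1 : ℕ) = (j : ℕ)) (i : ℕ) :
    cnt k n P j1 i = cnt m n Q1 j (min i (m*n)) := by
  have hkn := kn_eq (n := n) hm
  unfold cnt
  have hb : ∀ t : Fin (k*n),
      t ∈ Finset.univ.filter (fun t : Fin (k*n) => (t : ℕ) < i ∧ P t = j1) → (t:ℕ) < m*n := by
    intro t ht
    simp only [Finset.mem_filter, Finset.mem_univ, true_and] at ht
    by_contra hc
    have := hsh t (by omega)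
    rw [ht.2] at this
    have := j.isLt
    omega
  apply Finset.card_bij' (i := fun (t : Fin (k*n)) ht => (⟨(t:ℕ), hb t ht⟩ : Fin (m*n)))
    (j := fun (t : Fin (m*n)) _ => (⟨(t:ℕ), by have := t.isLt; omega⟩ : Fin (k*n)))
  case hi =>
    intro t ht
    have hbt := hb t ht
    simp only [Finset.mem_filter, Finset.mem_univ, true_and] at ht ⊢
    refine ⟨lt_min ht.1 hbt, ?_⟩
    apply Fin.ext
    rw [hcomp (t:ℕ) hbt t.isLt]
    have : (⟨(t:ℕ), t.isLt⟩ : Fin (k*n)) = t := Fin.eta t t.isLt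
    rw [this, ht.2, hj]
  case hj =>
    intro t ht
    simp only [Finset.mem_filter, Finset.mem_univ, true_and, Fin.val_mk] at ht ⊢
    refine ⟨lt_of_lt_of_le (Nat.lt_of_lt_of_le ht.1 (min_le_left _ _)) le_rfl, ?_⟩
    apply Fin.ext
    rw [← hcomp (t:ℕ) t.isLt (by have := t.isLt; omega)]
    have : (⟨(t:ℕ), t.isLt⟩ : Fin (m*n)) = t := Fin.eta t t.isLt
    rw [this, ht.2, hj]
  case left_inv =>
    intro t ht
    apply Fin.ext
    simp
  case right_inv =>
    intro t ht
    apply Fin.ext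
    simp

lemma cnt_second (hm : k = m + m) {P : Fin (k*n) → Fin k} {Q2 : Fin (m*n) → Fin m}
    (hcomp : ∀ (t : ℕ) (h1 : t < m*n) (h2 : m*n + t < k*n),
      ((Q2 ⟨t, h1⟩ : ℕ)) + m = (P ⟨m*n + t, h2⟩ : ℕ))
    (hsh : ∀ t : Fin (k*n), (t:ℕ) < m*n → (P t : ℕ) < m)
    (j : Fin m) (j2 : Fin k) (hj : (j2 : ℕ) = m + (j : ℕ)) (i : ℕ) (hi : i ≤ k*n) :
    cnt k n P j2 i = cnt m n Q2 j (i - m*n) := by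
  have hkn := kn_eq (n := n) hm
  unfold cnt
  have hb : ∀ t : Fin (k*n),
      t ∈ Finset.univ.filter (fun t : Fin (k*n) => (t : ℕ) < i ∧ P t = j2) → m*n ≤ (t:ℕ) := by
    intro t ht
    simp only [Finset.mem_filter, Finset.mem_univ, true_and] at ht
    by_contra hc
    have := hsh t (by omega)
    rw [ht.2] at this
    omega
  apply Finset.card_bij' (i := fun (t : Fin (k*n)) ht => (⟨(t:ℕ) - m*n, by
      have := t.isLt; have := hb t ht; omega⟩ : Fin (m*n)))
    (j := fun (t : Fin (m*n)) _ => (⟨m*n + (t:ℕ), by have := t.isLt; omega⟩ : Fin (k*n)))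
  case hi =>
    intro t ht
    have hbt := hb t ht
    simp only [Finset.mem_filter, Finset.mem_univ, true_and] at ht ⊢
    refine ⟨by omega, ?_⟩
    apply Fin.ext
    have e := hcomp ((t:ℕ) - m*n) (by have := t.isLt; omega) (by have := t.isLt; omega)
    have hidx : (⟨m*n + ((t:ℕ) - m*n), by have := t.isLt; omega⟩ : Fin (k*n)) = t :=
      Fin.ext (by simp only [Fin.val_mk]; omega)
    rw [hidx] at e
    rw [ht.2, hj] at e
    omega
  case hj =>
    intro t ht
    simp only [Finset.mem_filter, Finset.mem_univ, true_and, Fin.val_mk] at ht ⊢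
    refine ⟨by omega, ?_⟩
    apply Fin.ext
    have e := hcomp (t:ℕ) t.isLt (by have := t.isLt; omega)
    have : (⟨(t:ℕ), t.isLt⟩ : Fin (m*n)) = t := Fin.eta t t.isLt
    rw [this, ht.2] at e
    rw [hj]
    omega
  case left_inv =>
    intro t ht
    have := hb t ht
    apply Fin.ext
    simp only [Fin.val_mk]
    omega
  case right_inv =>
    intro t ht
    apply Fin.ext
    simp only [Fin.val_mk]
    omega

end split

def half1 (k m n : ℕ) (hm : k = m + m) (P : Fin (k*n) → Fin k)
    (hsh : ∀ t : Fin (k*n), (t:ℕ) < m*n → (P t : ℕ) < m) : Fin (m*n) → Fin m :=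
  fun t =>
    have hlt : (t:ℕ) < k*n := by have := t.isLt; rw [kn_eq hm]; omega
    ⟨(P ⟨(t:ℕ), hlt⟩ : ℕ), hsh ⟨(t:ℕ), hlt⟩ t.isLt⟩

def half2 (k m n : ℕ) (hm : k = m + m) (P : Fin (k*n) → Fin k)
    (hsh : ∀ t : Fin (k*n), m*n ≤ (t:ℕ) → m ≤ (P t : ℕ)) : Fin (m*n) → Fin m :=
  fun t =>
    have hlt : m*n + (t:ℕ) < k*n := by have := t.isLt; rw [kn_eq hm]; omega
    ⟨(P ⟨m*n + (t:ℕ), hlt⟩ : ℕ) - m, by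
      have h1 := hsh ⟨m*n + (t:ℕ), hlt⟩ (Nat.le_add_right _ _)
      have h2 := (P ⟨m*n + (t:ℕ), hlt⟩).isLt
      omega⟩

def glue (k m n : ℕ) (hm : k = m + m) (Q1 Q2 : Fin (m*n) → Fin m) : Fin (k*n) → Fin k :=
  fun t =>
    if h : (t:ℕ) < m*n then
      ⟨(Q1 ⟨(t:ℕ), h⟩ : ℕ), by have := (Q1 ⟨(t:ℕ), h⟩).isLt; omega⟩
    else
      have hlt : (t:ℕ) - m*n < m*n := by
        have h2 := t.isLt
        have h3 : k*n = m*n + m*n := kn_eq hm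
        omega
      ⟨m + (Q2 ⟨(t:ℕ) - m*n, hlt⟩ : ℕ), by have := (Q2 ⟨(t:ℕ) - m*n, hlt⟩).isLt; omega⟩

section glue
variable {k m n : ℕ} (hm : k = m + m)

lemma half1_val {P hsh} (t : Fin (m*n)) (h : (t:ℕ) < k*n) :
    ((half1 k m n hm P hsh t : Fin m) : ℕ) = (P ⟨(t:ℕ), h⟩ : ℕ) := rfl

lemma half2_val {P hsh} (t : Fin (m*n)) (h : m*n + (t:ℕ) < k*n) :
    ((half2 k m n hm P hsh t : Fin m) : ℕ) = (P ⟨m*n + (t:ℕ), h⟩ : ℕ) - m := rfl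

lemma glue_val_lt {Q1 Q2} (t : Fin (k*n)) (h : (t:ℕ) < m*n) (t' : Fin (m*n))
    (ht' : (t' : ℕ) = (t:ℕ)) :
    ((glue k m n hm Q1 Q2 t : Fin k) : ℕ) = (Q1 t' : ℕ) := by
  unfold glue
  rw [dif_pos h]
  show (Q1 ⟨(t:ℕ), h⟩ : ℕ) = (Q1 t' : ℕ)
  have he : t' = ⟨(t:ℕ), h⟩ := Fin.ext (by simpa using ht')
  rw [he]

lemma glue_val_ge {Q1 Q2} (t : Fin (k*n)) (h : ¬ (t:ℕ) < m*n) (t' : Fin (m*n))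
    (ht' : (t' : ℕ) = (t:ℕ) - m*n) :
    ((glue k m n hm Q1 Q2 t : Fin k) : ℕ) = m + (Q2 t' : ℕ) := by
  unfold glue
  rw [dif_neg h]
  have hlt2 : (t:ℕ) - m*n < m*n := ht' ▸ t'.isLt
  show m + (Q2 ⟨(t:ℕ) - m*n, hlt2⟩ : ℕ) = m + (Q2 t' : ℕ)
  have he : t' = ⟨(t:ℕ) - m*n, hlt2⟩ := Fin.ext (by simpa using ht')
  rw [he]

lemma half1_BBP {P} (hP : IsBBP k n P) (hsh : ShapeP k m n P) :
    IsBBP m n (half1 k m n hm P (fun t => (hsh t).1)) := by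
  have hkn := kn_eq (n := n) hm
  have hc1 : ∀ (t : ℕ) (h1 : t < m*n) (h2 : t < k*n),
      ((half1 k m n hm P (fun t => (hsh t).1) ⟨t, h1⟩ : ℕ)) = (P ⟨t, h2⟩ : ℕ) :=
    fun t h1 h2 => rfl
  constructor
  · intro j
    have e := cnt_first hm hc1 (fun t => (hsh t).2) j ⟨(j:ℕ), by have := j.isLt; omega⟩
      rfl (k*n)
    rw [hP.1, min_eq_right (by omega)] at e
    exact e.symm
  · intro i hi j j' hjj
    have e1 := cnt_first hm hc1 (fun t => (hsh t).2) j ⟨(j:ℕ), by have := j.isLt; omega⟩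
      rfl i
    have e2 := cnt_first hm hc1 (fun t => (hsh t).2) j' ⟨(j':ℕ), by have := j'.isLt; omega⟩
      rfl i
    rw [min_eq_left hi] at e1 e2
    rw [← e1, ← e2]
    apply hP.2 i (by omega)
    rw [Fin.le_def]
    exact hjj

lemma half2_BBP {P} (hP : IsBBP k n P) (hsh : ShapeP k m n P) :
    IsBBP m n (half2 k m n hm P (fun t => (hsh t).2)) := by
  have hkn := kn_eq (n := n) hm
  have hc2 : ∀ (t : ℕ) (h1 : t < m*n) (h2 : m*n + t < k*n),
      ((half2 k m n hm P (fun t => (hsh t).2) ⟨t, h1⟩ : ℕ)) + m = (P ⟨m*n + t, h2⟩ : ℕ) := by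
    intro t h1 h2
    rw [half2_val hm ⟨t, h1⟩ h2]
    simp only [Fin.val_mk]
    have := (hsh ⟨m*n + t, h2⟩).2 (Nat.le_add_right _ _)
    omega
  constructor
  · intro j
    have e := cnt_second hm hc2 (fun t => (hsh t).1) j ⟨m + (j:ℕ), by have := j.isLt; omega⟩
      rfl (k*n) le_rfl
    rw [hP.1] at e
    have : k*n - m*n = m*n := by omega
    rw [this] at e
    exact e.symm
  · intro i hi j j' hjj
    have e1 := cnt_second hm hc2 (fun t => (hsh t).1) j ⟨m + (j:ℕ), by have := j.isLt; omega⟩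
      rfl (m*n + i) (by omega)
    have e2 := cnt_second hm hc2 (fun t => (hsh t).1) j' ⟨m + (j':ℕ), by have := j'.isLt; omega⟩
      rfl (m*n + i) (by omega)
    have hsub : m*n + i - m*n = i := by omega
    rw [hsub] at e1 e2
    rw [← e1, ← e2]
    apply hP.2 (m*n + i) (by omega)
    rw [Fin.le_def]
    simp only [Fin.val_mk]
    omega

lemma glue_shape {Q1 Q2} : ShapeP k m n (glue k m n hm Q1 Q2) := by
  have hkn := kn_eq (n := n) hm
  intro t
  constructor
  · intro h
    rw [glue_val_lt hm t h ⟨(t:ℕ), h⟩ rfl]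
    exact (Q1 _).isLt
  · intro h
    rw [glue_val_ge hm t (by omega) ⟨(t:ℕ) - m*n, by have := t.isLt; omega⟩ rfl]
    omega

lemma glue_BBP {Q1 Q2} (hQ1 : IsBBP m n Q1) (hQ2 : IsBBP m n Q2) :
    IsBBP k n (glue k m n hm Q1 Q2) := by
  have hkn := kn_eq (n := n) hm
  set P := glue k m n hm Q1 Q2 with hPdef
  have hsh := glue_shape (Q1 := Q1) (Q2 := Q2) hm
  have hc1 : ∀ (t : ℕ) (h1 : t < m*n) (h2 : t < k*n),
      ((Q1 ⟨t, h1⟩ : ℕ)) = (P ⟨t, h2⟩ : ℕ) := by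
    intro t h1 h2
    exact (glue_val_lt hm ⟨t, h2⟩ h1 ⟨t, h1⟩ rfl).symm
  have hc2 : ∀ (t : ℕ) (h1 : t < m*n) (h2 : m*n + t < k*n),
      ((Q2 ⟨t, h1⟩ : ℕ)) + m = (P ⟨m*n + t, h2⟩ : ℕ) := by
    intro t h1 h2
    rw [glue_val_ge hm ⟨m*n + t, h2⟩ (by simp only [Fin.val_mk]; omega) ⟨t, h1⟩
      (by simp only [Fin.val_mk]; omega)]
    omega
  constructor
  · intro j
    by_cases hj : (j:ℕ) < m
    · have e := cnt_first hm hc1 (fun t => (hsh t).2) ⟨(j:ℕ), hj⟩ j rfl (k*n)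
      rw [min_eq_right (by omega), hQ1.1] at e
      exact e
    · have e := cnt_second hm hc2 (fun t => (hsh t).1) ⟨(j:ℕ) - m, by have := j.isLt; omega⟩
        j (by simp only [Fin.val_mk]; omega) (k*n) le_rfl
      have h2 : k*n - m*n = m*n := by omega
      rw [h2, hQ2.1] at e
      exact e
  · intro i hi j j' hjj
    rw [Fin.le_def] at hjj
    by_cases hj' : (j':ℕ) < m
    · have hj : (j:ℕ) < m := by omega
      have e1 := cnt_first hm hc1 (fun t => (hsh t).2) ⟨(j:ℕ), hj⟩ j rfl i
      have e2 := cnt_first hm hc1 (fun t => (hsh t).2) ⟨(j':ℕ), hj'⟩ j' rfl i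
      rw [e1, e2]
      apply hQ1.2 (min i (m*n)) (min_le_right _ _)
      rw [Fin.le_def]
      exact hjj
    · by_cases hj : (j:ℕ) < m
      · -- j up, j' down
        have e1 := cnt_first hm hc1 (fun t => (hsh t).2) ⟨(j:ℕ), hj⟩ j rfl i
        have e2 := cnt_second hm hc2 (fun t => (hsh t).1) ⟨(j':ℕ) - m, by have := j'.isLt; omega⟩
          j' (by simp only [Fin.val_mk]; omega) i hi
        rw [e1, e2]
        by_cases hile : i ≤ m*n
        · have : i - m*n = 0 := by omega
          rw [this, cnt_zero]
          exact Nat.zero_le _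
        · have : min i (m*n) = m*n := by omega
          rw [this, hQ1.1]
          exact cnt_le_n hQ2 _ _
      · -- both down
        have e1 := cnt_second hm hc2 (fun t => (hsh t).1) ⟨(j:ℕ) - m, by have := j.isLt; omega⟩
          j (by simp only [Fin.val_mk]; omega) i hi
        have e2 := cnt_second hm hc2 (fun t => (hsh t).1) ⟨(j':ℕ) - m, by have := j'.isLt; omega⟩
          j' (by simp only [Fin.val_mk]; omega) i hi
        rw [e1, e2]
        apply hQ2.2 (i - m*n) (by omega)
        rw [Fin.le_def]
        simp only [Fin.val_mk]
        omega

end glue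

lemma card_shape {k m n : ℕ} (hm : k = m + m) :
    Nat.card {P : Fin (k*n) → Fin k // IsBBP k n P ∧ ShapeP k m n P}
      = (Cdim m n)^2 := by
  have hkn := kn_eq (n := n) hm
  have e : {P : Fin (k*n) → Fin k // IsBBP k n P ∧ ShapeP k m n P}
      ≃ {Q : Fin (m*n) → Fin m // IsBBP m n Q} × {Q : Fin (m*n) → Fin m // IsBBP m n Q} := by
    refine
      { toFun := fun PP =>
          (⟨half1 k m n hm PP.1 (fun t => (PP.2.2 t).1), half1_BBP hm PP.2.1 PP.2.2⟩,
           ⟨half2 k m n hm PP.1 (fun t => (PP.2.2 t).2), half2_BBP hm PP.2.1 PP.2.2⟩),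
        invFun := fun QQ =>
          ⟨glue k m n hm QQ.1.1 QQ.2.1,
            glue_BBP hm QQ.1.2 QQ.2.2, glue_shape hm⟩,
        left_inv := ?_, right_inv := ?_ }
    · rintro ⟨P, hP, hsh⟩
      apply Subtype.ext
      funext t
      simp only
      by_cases h : (t:ℕ) < m*n
      · apply Fin.ext
        rw [glue_val_lt hm t h ⟨(t:ℕ), h⟩ rfl,
          half1_val hm ⟨(t:ℕ), h⟩ (by simp only [Fin.val_mk]; omega)]
      · apply Fin.ext
        have hlt2 : (t:ℕ) - m*n < m*n := by have := t.isLt; omega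
        have hX : m*n + ((t:ℕ) - m*n) < k*n := by have := t.isLt; omega
        rw [glue_val_ge hm t h ⟨(t:ℕ) - m*n, hlt2⟩ rfl,
          half2_val hm ⟨(t:ℕ) - m*n, hlt2⟩ (by simp only [Fin.val_mk]; exact hX)]
        simp only [Fin.val_mk]
        have hidx : (⟨m*n + ((t:ℕ) - m*n), hX⟩ : Fin (k*n)) = t :=
          Fin.ext (by simp only [Fin.val_mk]; omega)
        rw [hidx]
        have := (hsh t).2 (by omega)
        omega
    · rintro ⟨⟨Q1, hQ1⟩, ⟨Q2, hQ2⟩⟩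
      have hshg := glue_shape (Q1 := Q1) (Q2 := Q2) hm
      refine Prod.ext ?_ ?_
      · apply Subtype.ext
        funext t
        simp only
        apply Fin.ext
        rw [half1_val hm t (by have := t.isLt; omega),
          glue_val_lt hm ⟨(t:ℕ), by have := t.isLt; omega⟩ t.isLt t rfl]
      · apply Subtype.ext
        funext t
        simp only
        apply Fin.ext
        have hX : m*n + (t:ℕ) < k*n := by have := t.isLt; omega
        rw [half2_val hm t hX,
          glue_val_ge hm ⟨m*n + (t:ℕ), hX⟩ (by simp only [Fin.val_mk]; omega) t
            (by simp only [Fin.val_mk]; omega)]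
        omega
  rw [Nat.card_congr e, Nat.card_prod]
  unfold Cdim
  ring

theorem stmt19 (k n : ℕ) (hk : 2 ≤ k) (hke : Even k) (hn : 1 ≤ n) :
    Nat.card {P : Fin (k*n) → Fin k // IsBBP k n P ∧ numPeaks k n P = 1}
        = (Cdim (k/2) n)^2 ∧
    ∀ P : Fin (k*n) → Fin k, IsBBP k n P →
      (numPeaks k n P = 1 ↔
        ∀ t : Fin (k*n), ((t : ℕ) < (k/2)*n → (P t : ℕ) < k/2) ∧
          ((k/2)*n ≤ (t : ℕ) → k/2 ≤ (P t : ℕ))) := by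
  obtain ⟨m, hm⟩ := hke
  have hm2 : k/2 = m := by omega
  have hm0 : 0 < m := by omega
  have hiff : ∀ P : Fin (k*n) → Fin k, IsBBP k n P →
      (numPeaks k n P = 1 ↔ ShapeP k m n P) := fun P hP =>
    ⟨shape_of_peaks hm hm2 hm0 hn hP, peaks_of_shape hm hm2 hm0 hn⟩
  constructor
  · have e : {P : Fin (k*n) → Fin k // IsBBP k n P ∧ numPeaks k n P = 1}
        ≃ {P : Fin (k*n) → Fin k // IsBBP k n P ∧ ShapeP k m n P} :=
      Equiv.subtypeEquivRight (fun P => and_congr_right (fun hP => hiff P hP))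
    rw [Nat.card_congr e, card_shape hm, hm2]
  · intro P hP
    rw [hm2]
    exact hiff P hP
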